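/- arXiv:1610.02730 — 3 statements merged into one kernel-verified Lean document; each statement's English description precedes it below -/
import Mathlib

section
/- Let f : N → M be a k-sheeted covering map of smooth manifolds and V a smooth section of the tangent bundle TN. Let Q = {df_y(V(y)) : y ∈ N} ⊆ TM and let Σ ⊆ M be the set of points x such that the set {df_y(V(y)) : y ∈ f⁻¹(x)} has fewer than k elements. Then Σ's complement M' = M \ Σ is such that Q ∩ π_{TM}⁻¹(M') is a k-sheeted covering space of M' under the tangent bundle projection. -/
open Bundle

open Topology in
theorem aux_main {Nt Mt Tt : Type*} [TopologicalSpace Nt] [TopologicalSpace Mt]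
    [TopologicalSpace Tt]
    (f : Nt → Mt) (hcov : IsCoveringMap f)
    (k : ℕ) (hk : 0 < k) (hsheets : ∀ x : Mt, Nat.card (f ⁻¹' {x}) = k)
    (g : Nt → Tt) (hg : Continuous g)
    (pr : Tt → Mt) (hpr : Continuous pr) (hgf : ∀ y, pr (g y) = f y)
    (hsep : ∀ (x : Mt) (s : Set Tt), s.Finite → (∀ v ∈ s, pr v = x) →
      ∃ O : Tt → Set Tt, (∀ v, IsOpen (O v)) ∧ (∀ v ∈ s, v ∈ O v) ∧ s.PairwiseDisjoint O)
    (Q : Set Tt) (hQ : Q = Set.range g)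
    (Sig : Set Mt)
    (hSig : Sig = {x : Mt | Set.ncard {v : Tt | ∃ y, f y = x ∧ v = g y} < k}) :
    IsCoveringMap (fun v : {v : Tt // v ∈ Q ∧ pr v ∉ Sig} =>
      (⟨pr v.1, v.2.2⟩ : {x : Mt // x ∉ Sig})) ∧
    ∀ x : {x : Mt // x ∉ Sig}, Nat.card
      ((fun v : {v : Tt // v ∈ Q ∧ pr v ∉ Sig} =>
        (⟨pr v.1, v.2.2⟩ : {x : Mt // x ∉ Sig})) ⁻¹' {x}) = k := by
  classical
  -- basic facts about fibers
  have hfin : ∀ x : Mt, (f ⁻¹' {x}).Finite := by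
    intro x
    have h1 : 0 < Nat.card (f ⁻¹' {x}) := (hsheets x) ▸ hk
    rw [Nat.card_pos_iff] at h1
    haveI := h1.2
    exact Set.toFinite _
  have hne : ∀ x : Mt, (f ⁻¹' {x}).Nonempty := by
    intro x
    have h1 : 0 < Nat.card (f ⁻¹' {x}) := (hsheets x) ▸ hk
    rw [Nat.card_pos_iff] at h1
    exact Set.nonempty_coe_sort.mp h1.1
  have hfibcard : ∀ x, (f ⁻¹' {x}).ncard = k := fun x => by
    rw [← Nat.card_coe_set_eq]; exact hsheets x
  set S : Mt → Set Tt := fun x => {v | ∃ y, f y = x ∧ v = g y} with hSdef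
  have hS_img : ∀ x, S x = g '' (f ⁻¹' {x}) := by
    intro x; ext v
    simp only [hSdef, Set.mem_setOf_eq, Set.mem_image, Set.mem_preimage, Set.mem_singleton_iff]
    constructor
    · rintro ⟨y, h1, h2⟩; exact ⟨y, h1, h2.symm⟩
    · rintro ⟨y, h1, h2⟩; exact ⟨y, h1, h2.symm⟩
  have hSfin : ∀ x, (S x).Finite := fun x => (hS_img x) ▸ ((hfin x).image g)
  have hScard : ∀ x ∉ Sig, (S x).ncard = k := by
    intro x hx
    have hle : (S x).ncard ≤ k := by
      rw [hS_img]
      calc (g '' (f ⁻¹' {x})).ncard ≤ (f ⁻¹' {x}).ncard := Set.ncard_image_le (hfin x)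
        _ = k := hfibcard x
    have hge : ¬ ((S x).ncard < k) := by
      rw [hSig] at hx
      simpa [hSdef] using hx
    omega
  have hginj : ∀ x ∉ Sig, Set.InjOn g (f ⁻¹' {x}) := by
    intro x hx
    apply Set.Finite.injOn_of_encard_image_eq (hfin x)
    rw [← hS_img, ← (hSfin x).cast_ncard_eq, ← (hfin x).cast_ncard_eq,
      hScard x hx, hfibcard x]
  set p : {v : Tt // v ∈ Q ∧ pr v ∉ Sig} → {x : Mt // x ∉ Sig} :=
    fun v => ⟨pr v.1, v.2.2⟩ with hpdef
  have hpcont : Continuous p := (hpr.comp continuous_subtype_val).subtype_mk _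
  -- the key construction: a trivialization of `p` at each point
  have key : ∀ (x₀ : Mt) (hx₀ : x₀ ∉ Sig),
      ∃ tv : Trivialization (↥(f ⁻¹' {x₀})) p, (⟨x₀, hx₀⟩ : {x : Mt // x ∉ Sig}) ∈ tv.baseSet := by
    intro x₀ hx₀
    haveI hdisc : DiscreteTopology ↥(f ⁻¹' {x₀}) := (hcov x₀).1
    haveI hFfin : Finite ↥(f ⁻¹' {x₀}) := (hfin x₀).to_subtype
    haveI hFne : Nonempty ↥(f ⁻¹' {x₀}) := (hne x₀).to_subtype
    set t := (hcov x₀).toTrivialization with htdef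
    have hx₀t : x₀ ∈ t.baseSet := (hcov x₀).mem_toTrivialization_baseSet
    set F := ↥(f ⁻¹' {x₀}) with hFdef
    set sec : F → Mt → Nt := fun i x => t.toOpenPartialHomeomorph.symm (x, i) with hsecdef
    have hsec_f : ∀ (i : F) (x), x ∈ t.baseSet → f (sec i x) = x := fun i x hx =>
      t.proj_symm_apply (t.mem_target.mpr hx)
    have hsec_t : ∀ (i : F) (x), x ∈ t.baseSet → t (sec i x) = (x, i) := fun i x hx =>
      t.apply_symm_apply (t.mem_target.mpr hx)
    have hsec_inj : ∀ x ∈ t.baseSet, ∀ i j : F, sec i x = sec j x → i = j := by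
      intro x hx i j h
      have h1 := hsec_t i x hx
      rw [h, hsec_t j x hx] at h1
      exact ((Prod.ext_iff.mp h1).2).symm
    have hsec_surj : ∀ x ∈ t.baseSet, ∀ y, f y = x → ∃ i : F, y = sec i x := by
      intro x hx y hy
      have hys : y ∈ t.source := t.mem_source.mpr (hy ▸ hx)
      refine ⟨(t y).2, ?_⟩
      have h1 : t y = (x, (t y).2) := Prod.ext (by rw [t.coe_fst hys, hy]) rfl
      calc y = t.toOpenPartialHomeomorph.symm (t y) := (t.toOpenPartialHomeomorph.left_inv hys).symm
        _ = sec (t y).2 x := by rw [h1]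
    have hsec_cont : ∀ i : F, ContinuousOn (sec i) t.baseSet := by
      intro i
      exact t.toOpenPartialHomeomorph.continuousOn_symm.comp
        ((continuous_id.prodMk continuous_const).continuousOn)
        (fun x hx => t.mem_target.mpr hx)
    -- disjoint open sets separating the points of `S x₀`
    have hsproj : ∀ v ∈ S x₀, pr v = x₀ := by
      rintro v ⟨y, hy, rfl⟩; rw [hgf, hy]
    obtain ⟨O, hOopen, hOmem, hOdisj⟩ := hsep x₀ (S x₀) (hSfin x₀) hsproj
    set Ω : F → Set Tt := fun i => O (g (sec i x₀)) with hΩdef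
    have hsecmem : ∀ i : F, sec i x₀ ∈ f ⁻¹' {x₀} := fun i => by
      simp only [Set.mem_preimage, Set.mem_singleton_iff]; exact hsec_f i x₀ hx₀t
    have hgsec_mem : ∀ i : F, g (sec i x₀) ∈ S x₀ := fun i =>
      ⟨sec i x₀, hsec_f i x₀ hx₀t, rfl⟩
    have hΩmem : ∀ i, g (sec i x₀) ∈ Ω i := fun i => hOmem _ (hgsec_mem i)
    have hΩdisj : ∀ i j : F, i ≠ j → Disjoint (Ω i) (Ω j) := by
      intro i j hij
      refine hOdisj (hgsec_mem i) (hgsec_mem j) ?_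
      intro h
      exact hij (hsec_inj x₀ hx₀t i j (hginj x₀ hx₀ (hsecmem i) (hsecmem j) h))
    -- the open neighborhood `U` of `x₀`
    set U : Set Mt := t.baseSet ∩ ⋂ i : F,
      (t.baseSet ∩ (fun x => g (sec i x)) ⁻¹' Ω i) with hUdef
    have hUopen : IsOpen U := by
      refine t.open_baseSet.inter (isOpen_iInter_of_finite fun i => ?_)
      exact (hg.comp_continuousOn (hsec_cont i)).isOpen_inter_preimage
        t.open_baseSet (hOopen _)
    have hUsub : U ⊆ t.baseSet := Set.inter_subset_left
    have hx₀U : x₀ ∈ U :=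
      ⟨hx₀t, Set.mem_iInter.mpr fun i => ⟨hx₀t, hΩmem i⟩⟩
    have hUmem : ∀ x ∈ U, ∀ i : F, g (sec i x) ∈ Ω i := fun x hx i =>
      (Set.mem_iInter.mp hx.2 i).2
    set B : Set {x : Mt // x ∉ Sig} := Subtype.val ⁻¹' U with hBdef
    have hBopen : IsOpen B := hUopen.preimage continuous_subtype_val
    -- every point of `Q` over `U` comes from a section, and lies in a unique `Ω i`
    have hv_mem : ∀ v : {v : Tt // v ∈ Q ∧ pr v ∉ Sig}, pr v.1 ∈ U →
        ∃ i : F, v.1 = g (sec i (pr v.1)) := by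
      intro v hvU
      have hvQ : v.1 ∈ Set.range g := hQ ▸ v.2.1
      obtain ⟨y, hy⟩ := hvQ
      obtain ⟨i, hi⟩ := hsec_surj (pr v.1) (hUsub hvU) y (by rw [← hy, hgf])
      refine ⟨i, ?_⟩
      conv_lhs => rw [← hy]
      exact congrArg g hi
    set idx : {v : Tt // v ∈ Q ∧ pr v ∉ Sig} → F :=
      fun v => if h : ∃ i : F, v.1 ∈ Ω i then h.choose else Classical.arbitrary F with hidxdef
    have hidx : ∀ v, ∀ i : F, v.1 ∈ Ω i → idx v = i := by
      intro v i hvi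
      have hex : ∃ j : F, v.1 ∈ Ω j := ⟨i, hvi⟩
      have h1 : idx v = hex.choose := by simp only [hidxdef, dif_pos hex]
      by_contra hne'
      rw [h1] at hne'
      exact Set.disjoint_left.mp (hΩdisj _ i hne') hex.choose_spec hvi
    -- the inverse function
    set inv : {x : Mt // x ∉ Sig} × F → {v : Tt // v ∈ Q ∧ pr v ∉ Sig} :=
      fun q => if h : (q.1 : Mt) ∈ t.baseSet then
        ⟨g (sec q.2 q.1.1), by rw [hQ]; exact Set.mem_range_self _,
          by rw [hgf, hsec_f _ _ h]; exact q.1.2⟩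
      else
        ⟨g (sec (Classical.arbitrary F) x₀), by rw [hQ]; exact Set.mem_range_self _,
          by rw [hgf, hsec_f _ _ hx₀t]; exact hx₀⟩ with hinvdef
    have hinv_val : ∀ q : {x : Mt // x ∉ Sig} × F, (q.1 : Mt) ∈ t.baseSet →
        (inv q).1 = g (sec q.2 q.1.1) := by
      intro q h; simp only [hinvdef, dif_pos h]
    have hinv_p : ∀ q : {x : Mt // x ∉ Sig} × F, (q.1 : Mt) ∈ t.baseSet →
        p (inv q) = q.1 := by
      intro q h
      apply Subtype.ext
      show pr (inv q).1 = q.1.1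
      rw [hinv_val q h, hgf, hsec_f _ _ h]
    refine ⟨{ toFun := fun v => (p v, idx v),
              invFun := inv,
              source := p ⁻¹' B,
              target := B ×ˢ (Set.univ : Set F),
              map_source' := fun v hv => ⟨hv, Set.mem_univ _⟩,
              map_target' := ?_,
              left_inv' := ?_,
              right_inv' := ?_,
              open_source := hBopen.preimage hpcont,
              open_target := hBopen.prod isOpen_univ,
              continuousOn_toFun := ?_,
              continuousOn_invFun := ?_,
              baseSet := B,
              open_baseSet := hBopen,
              source_eq := rfl,
              target_eq := rfl,
              proj_toFun := fun v _ => rfl }, ?_⟩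
    · -- map_target'
      rintro q ⟨hq, -⟩
      have hqb : (q.1 : Mt) ∈ t.baseSet := hUsub hq
      show p (inv q) ∈ B
      rw [hinv_p q hqb]
      exact hq
    · -- left_inv'
      intro v hv
      have hvU : pr v.1 ∈ U := hv
      have hvb : pr v.1 ∈ t.baseSet := hUsub hvU
      obtain ⟨i, hi⟩ := hv_mem v hvU
      have hvΩ : v.1 ∈ Ω i := hi ▸ hUmem _ hvU i
      have hidxv : idx v = i := hidx v i hvΩ
      apply Subtype.ext
      rw [hinv_val _ hvb]
      show g (sec (idx v) (pr v.1)) = v.1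
      rw [hidxv, ← hi]
    · -- right_inv'
      rintro q ⟨hq, -⟩
      have hqb : (q.1 : Mt) ∈ t.baseSet := hUsub hq
      have h1 : (inv q).1 ∈ Ω q.2 := by
        rw [hinv_val q hqb]; exact hUmem _ hq q.2
      exact Prod.ext (hinv_p q hqb) (hidx _ _ h1)
    · -- continuousOn_toFun
      apply ContinuousOn.prodMk (hpcont.continuousOn)
      intro v hv
      have hvU : pr v.1 ∈ U := hv
      obtain ⟨i, hi⟩ := hv_mem v hvU
      have hvΩ : v.1 ∈ Ω i := hi ▸ hUmem _ hvU i
      have hA : (Subtype.val ⁻¹' Ω i : Set {v : Tt // v ∈ Q ∧ pr v ∉ Sig}) ∈ 𝓝 v :=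
        ((hOopen _).preimage continuous_subtype_val).mem_nhds hvΩ
      apply ContinuousWithinAt.congr_of_eventuallyEq (continuousWithinAt_const (b := i))
      · filter_upwards [nhdsWithin_le_nhds hA] with w hw
        exact hidx w i hw
      · exact hidx v i hvΩ
    · -- continuousOn_invFun
      have hc : ContinuousOn (fun q : {x : Mt // x ∉ Sig} × F => g (sec q.2 q.1.1))
          (B ×ˢ (Set.univ : Set F)) := by
        have h1 : ContinuousOn (fun q : {x : Mt // x ∉ Sig} × F =>
            t.toOpenPartialHomeomorph.symm (q.1.1, q.2)) (B ×ˢ (Set.univ : Set F)) := by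
          refine t.toOpenPartialHomeomorph.continuousOn_symm.comp
            (Continuous.continuousOn (by fun_prop)) ?_
          rintro q ⟨hq, -⟩
          exact t.mem_target.mpr (hUsub hq)
        exact hg.comp_continuousOn h1
      have heq : Set.EqOn (fun q => ((inv q : {v : Tt // v ∈ Q ∧ pr v ∉ Sig}) : Tt))
          (fun q : {x : Mt // x ∉ Sig} × F => g (sec q.2 q.1.1))
          (B ×ˢ (Set.univ : Set F)) := by
        rintro q ⟨hq, -⟩
        exact hinv_val q (hUsub hq)
      have : ContinuousOn (fun q => ((inv q : {v : Tt // v ∈ Q ∧ pr v ∉ Sig}) : Tt))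
          (B ×ˢ (Set.univ : Set F)) := hc.congr heq
      exact (Topology.IsInducing.continuousOn_iff Topology.IsInducing.subtypeVal).mpr this
    · -- x₀ ∈ baseSet
      exact hx₀U
  have hcovp : IsCoveringMap p := by
    rintro ⟨x₀, hx₀⟩
    obtain ⟨tv, htv⟩ := key x₀ hx₀
    haveI : DiscreteTopology ↥(f ⁻¹' {x₀}) := (hcov x₀).1
    exact IsEvenlyCovered.to_isEvenlyCovered_preimage (.of_trivialization htv)
  refine ⟨hcovp, ?_⟩
  intro x
  have hx : x.1 ∉ Sig := x.2
  have e : ↥(p ⁻¹' {x}) ≃ ↥(S x.1) := by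
    refine Equiv.ofBijective (fun w => ⟨w.1.1, ?_⟩) ⟨?_, ?_⟩
    · obtain ⟨y, hy⟩ : w.1.1 ∈ Set.range g := hQ ▸ w.1.2.1
      have hw : p w.1 = x := w.2
      have hprw : pr w.1.1 = x.1 := congrArg Subtype.val hw
      exact ⟨y, by rw [← hgf, hy, hprw], hy.symm⟩
    · intro w₁ w₂ h
      simp only [Subtype.mk.injEq] at h
      exact Subtype.ext (Subtype.ext h)
    · rintro ⟨v, y, hy1, hy2⟩
      have hprv : pr v = x.1 := by rw [hy2, hgf, hy1]
      refine ⟨⟨⟨v, ⟨hQ ▸ ⟨y, hy2.symm⟩, hprv ▸ hx⟩⟩, ?_⟩, rfl⟩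
      show p _ = x
      exact Subtype.ext hprv
  rw [Nat.card_congr e, Nat.card_coe_set_eq, hScard x.1 hx]

/-- Let `f : N → M` be a smooth `k`-sheeted covering map of smooth manifolds
and `V` a smooth vector field on `N`.  Let `Q = {df_y(V y) : y ∈ N} ⊆ TM` and let `Σ` be the
set of points `x ∈ M` over which the set `{df_y(V y) : y ∈ f⁻¹ x}` has fewer than `k` elements.
Then the part of `Q` lying over `M' = M \ Σ` is a `k`-sheeted covering space of `M'` under the
tangent bundle projection. -/
theorem stmt3 {H : Type*} [TopologicalSpace H] {E : Type*} [NormedAddCommGroup E]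
    [NormedSpace ℝ E] {I : ModelWithCorners ℝ E H}
    {N : Type*} [TopologicalSpace N] [ChartedSpace H N] [IsManifold I (⊤ : ℕ∞) N]
    {M : Type*} [TopologicalSpace M] [ChartedSpace H M] [IsManifold I (⊤ : ℕ∞) M]
    (f : N → M) (hf : ContMDiff I I (⊤ : ℕ∞) f) (hcov : IsCoveringMap f)
    (k : ℕ) (hk : 0 < k) (hsheets : ∀ x : M, Nat.card (f ⁻¹' {x}) = k)
    (V : ∀ y : N, TangentSpace I y)
    (hV : ContMDiff I I.tangent (⊤ : ℕ∞) (fun y : N => (⟨y, V y⟩ : TangentBundle I N)))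
    (Q : Set (TangentBundle I M))
    (hQ : Q = Set.range (fun y : N =>
      (⟨f y, mfderiv I I f y (V y)⟩ : TangentBundle I M)))
    (Sig : Set M)
    (hSig : Sig = {x : M | Set.ncard
      {v : TangentBundle I M | ∃ y : N, f y = x ∧
        v = (⟨f y, mfderiv I I f y (V y)⟩ : TangentBundle I M)} < k}) :
    IsCoveringMap (fun v : {v : TangentBundle I M // v ∈ Q ∧ v.proj ∉ Sig} =>
      (⟨v.1.proj, v.2.2⟩ : {x : M // x ∉ Sig})) ∧
    ∀ x : {x : M // x ∉ Sig}, Nat.card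
      ((fun v : {v : TangentBundle I M // v ∈ Q ∧ v.proj ∉ Sig} =>
        (⟨v.1.proj, v.2.2⟩ : {x : M // x ∉ Sig})) ⁻¹' {x}) = k := by
  have hgc : Continuous (fun y : N => (⟨f y, mfderiv I I f y (V y)⟩ : TangentBundle I M)) := by
    have h1 : ContMDiff I.tangent I.tangent (⊤ : ℕ∞) (tangentMap I I f) :=
      hf.contMDiff_tangentMap (by simp)
    exact h1.continuous.comp hV.continuous
  have hsep : ∀ (x : M) (s : Set (TangentBundle I M)), s.Finite →
      (∀ v ∈ s, Bundle.TotalSpace.proj v = x) →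
      ∃ O : TangentBundle I M → Set (TangentBundle I M), (∀ v, IsOpen (O v)) ∧
        (∀ v ∈ s, v ∈ O v) ∧ s.PairwiseDisjoint O := by
    intro x s hsfin hsx
    set τ := trivializationAt E (TangentSpace I) x with hτ
    have hxτ : x ∈ τ.baseSet := FiberBundle.mem_baseSet_trivializationAt E (TangentSpace I) x
    have hmem : ∀ v ∈ s, v ∈ τ.source := fun v hv =>
      τ.mem_source.mpr (by rw [hsx v hv]; exact hxτ)
    obtain ⟨W, hW, hWd⟩ := Set.Finite.t2_separation (s := (fun v => (τ v).2) '' s)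
      (hsfin.image _)
    refine ⟨fun v => τ.source ∩ τ ⁻¹' (Set.univ ×ˢ W (τ v).2), fun v => ?_, ?_, ?_⟩
    · exact τ.toOpenPartialHomeomorph.isOpen_inter_preimage (isOpen_univ.prod (hW _).2)
    · intro v hv
      exact ⟨hmem v hv, Set.mem_univ _, (hW _).1⟩
    · intro v hv w hw hvw
      have hsnd : (τ v).2 ≠ (τ w).2 := by
        intro h
        apply hvw
        have heq : τ v = τ w := Prod.ext
          (by rw [τ.coe_fst (hmem v hv), τ.coe_fst (hmem w hw), hsx v hv, hsx w hw]) h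
        exact τ.toOpenPartialHomeomorph.injOn (hmem v hv) (hmem w hw) heq
      have hd : Disjoint (W (τ v).2) (W (τ w).2) :=
        hWd (Set.mem_image_of_mem _ hv) (Set.mem_image_of_mem _ hw) hsnd
      refine Set.disjoint_left.mpr ?_
      rintro u ⟨-, -, hu1⟩ ⟨-, -, hu2⟩
      exact Set.disjoint_left.mp hd hu1 hu2
  exact aux_main f hcov k hk hsheets
    (fun y : N => (⟨f y, mfderiv I I f y (V y)⟩ : TangentBundle I M)) hgc
    Bundle.TotalSpace.proj (FiberBundle.continuous_proj E (TangentSpace I)) (fun y => rfl)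
    hsep Q hQ Sig hSig
end

section
/- The map ι : [0,∞) × S¹ → ℂ × S¹ defined by ι(r, e^{iφ}) = (r e^{2iφ}, e^{iφ}) has image exactly Q = {(z, w) : |w| = 1, |z| w² = z}, and its restriction to (0,∞) × S¹ is a homeomorphism onto Q' = Q ∩ ((ℂ \ {0}) × S¹). -/
noncomputable def stmt12Equiv :
    {r : ℝ // 0 < r} × {w : ℂ // ‖w‖ = 1} ≃
      {x : ℂ × ℂ // (‖x.2‖ = 1 ∧ ((‖x.1‖ : ℝ) : ℂ) * x.2 ^ 2 = x.1) ∧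
        x.1 ≠ 0} where
  toFun v := ⟨(((v.1 : ℝ) : ℂ) * (v.2 : ℂ) ^ 2, (v.2 : ℂ)), by
    constructor
    · refine ⟨v.2.2, ?_⟩
      have h1 : ‖(((v.1 : ℝ)) : ℂ) * (v.2 : ℂ) ^ 2‖ = (v.1 : ℝ) := by
        simp [norm_mul, norm_pow, v.2.2, Complex.norm_real, abs_of_pos v.1.2]
      rw [h1]
    · intro h
      rcases mul_eq_zero.1 h with h | h
      · exact absurd (Complex.ofReal_eq_zero.1 h) (ne_of_gt v.1.2)
      · have := v.2.2
        rw [pow_eq_zero_iff (by norm_num : (2:ℕ) ≠ 0)] at h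
        simp [h] at this⟩
  invFun x := ⟨⟨‖(x : ℂ × ℂ).1‖, norm_pos_iff.2 x.2.2⟩,
    ⟨(x : ℂ × ℂ).2, x.2.1.1⟩⟩
  left_inv v := by
    have h1 : ‖(((v.1 : ℝ)) : ℂ) * (v.2 : ℂ) ^ 2‖ = (v.1 : ℝ) := by
      simp [norm_mul, norm_pow, v.2.2, Complex.norm_real, abs_of_pos v.1.2]
    ext <;> simp [h1, v.2.2, abs_of_pos v.1.2]
  right_inv x := by
    apply Subtype.ext
    have := x.2.1.2
    exact Prod.ext this rfl

/-- The map `ι : [0,∞) × S¹ → ℂ × S¹`, `ι(r, e^{iφ}) = (r e^{2iφ}, e^{iφ})`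
(i.e. `ι(r,w) = (r·w², w)` for `|w| = 1`) has image exactly
`Q = {(z,w) : |w| = 1, |z|·w² = z}`, and its restriction to `(0,∞) × S¹` is a homeomorphism
onto `Q' = Q ∩ ((ℂ \ {0}) × S¹)`. -/
theorem stmt12 :
    (Set.range (fun v : {r : ℝ // 0 ≤ r} × {w : ℂ // ‖w‖ = 1} =>
        (((v.1 : ℝ) : ℂ) * (v.2 : ℂ) ^ 2, (v.2 : ℂ))) =
      {x : ℂ × ℂ | ‖x.2‖ = 1 ∧ ((‖x.1‖ : ℝ) : ℂ) * x.2 ^ 2 = x.1}) ∧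
    ∃ h : {r : ℝ // 0 < r} × {w : ℂ // ‖w‖ = 1} ≃ₜ
        {x : ℂ × ℂ // (‖x.2‖ = 1 ∧ ((‖x.1‖ : ℝ) : ℂ) * x.2 ^ 2 = x.1) ∧
          x.1 ≠ 0},
      ∀ v : {r : ℝ // 0 < r} × {w : ℂ // ‖w‖ = 1},
        ((h v : ℂ × ℂ) = (((v.1 : ℝ) : ℂ) * (v.2 : ℂ) ^ 2, (v.2 : ℂ))) := by
  constructor
  · ext x
    simp only [Set.mem_range, Set.mem_setOf_eq]
    constructor
    · rintro ⟨⟨⟨r, hr⟩, ⟨w, hw⟩⟩, rfl⟩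
      refine ⟨hw, ?_⟩
      simp [norm_mul, norm_pow, hw, Complex.norm_real, abs_of_nonneg hr]
    · rintro ⟨hw, hz⟩
      exact ⟨⟨⟨‖x.1‖, norm_nonneg _⟩, ⟨x.2, hw⟩⟩,
        Prod.ext hz rfl⟩
  · refine ⟨{ toEquiv := stmt12Equiv, continuous_toFun := ?_, continuous_invFun := ?_ },
      fun v => rfl⟩
    · apply Continuous.subtype_mk
      fun_prop
    · apply Continuous.prodMk
      · apply Continuous.subtype_mk
        exact continuous_norm.comp (continuous_fst.comp continuous_subtype_val)
      · apply Continuous.subtype_mk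
        fun_prop
end

section
/- Consider the binary differential equation y dx² − 2x dxdy − y dy² = 0 on ℝ², i.e., Q = {(x, y, [p : q]) ∈ ℝ² × ℝP¹ : y p² − 2xpq − y q² = 0}. Then over M' = ℝ² \ {(0,0)}, the projection (x,y,[p:q]) ↦ (x,y) restricted to Q' = Q ∩ (M' × ℝP¹) is a 2-sheeted covering map, and this covering is trivial: it admits two disjoint continuous sections s₁, s₂ : M' → Q' with s₁(M') ∪ s₂(M') = Q'. -/
open Projectivization

noncomputable instance : TopologicalSpace (Projectivization ℝ (ℝ × ℝ)) :=
  @instTopologicalSpaceQuotient _ (projectivizationSetoid ℝ (ℝ × ℝ)) _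

/-- The solution set of the binary differential equation `y dx² - 2x dxdy - y dy² = 0` in
`ℝ² × ℝP¹` (the condition is homogeneous, so it may be tested on the representative). -/
def bdeQ : Set ((ℝ × ℝ) × Projectivization ℝ (ℝ × ℝ)) :=
  {m | m.1.2 * m.2.rep.1 ^ 2 - 2 * m.1.1 * m.2.rep.1 * m.2.rep.2 -
        m.1.2 * m.2.rep.2 ^ 2 = 0}

namespace Stmt14N

lemma sq_add_sq_pos {w : ℝ × ℝ} (hw : w ≠ 0) : 0 < w.1 ^ 2 + w.2 ^ 2 := by
  rcases not_and_or.mp (fun h : w.1 = 0 ∧ w.2 = 0 => hw (Prod.ext h.1 h.2)) with h | h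
  · nlinarith [pow_two_pos_of_ne_zero h, sq_nonneg w.2]
  · nlinarith [pow_two_pos_of_ne_zero h, sq_nonneg w.1]

lemma bde_mk_iff (x y : ℝ) (w : ℝ × ℝ) (hw : w ≠ 0) :
    ((x, y), Projectivization.mk ℝ w hw) ∈ bdeQ ↔
      y * w.1 ^ 2 - 2 * x * w.1 * w.2 - y * w.2 ^ 2 = 0 := by
  obtain ⟨a, ha⟩ := exists_smul_eq_mk_rep ℝ w hw
  have h1 : (Projectivization.mk ℝ w hw).rep.1 = (a : ℝ) * w.1 := by rw [← ha]; rfl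
  have h2 : (Projectivization.mk ℝ w hw).rep.2 = (a : ℝ) * w.2 := by rw [← ha]; rfl
  have ha0 : (a : ℝ) ≠ 0 := a.ne_zero
  have key : y * ((a : ℝ) * w.1) ^ 2 - 2 * x * ((a : ℝ) * w.1) * ((a : ℝ) * w.2) -
      y * ((a : ℝ) * w.2) ^ 2 =
      (a : ℝ) ^ 2 * (y * w.1 ^ 2 - 2 * x * w.1 * w.2 - y * w.2 ^ 2) := by ring
  simp only [bdeQ, Set.mem_setOf_eq, h1, h2, key, mul_eq_zero]
  have hne : ¬((a : ℝ) ^ 2 = 0) := pow_ne_zero 2 ha0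
  tauto

lemma mk_eq_of_cross {w w' : ℝ × ℝ} (hw : w ≠ 0) (hw' : w' ≠ 0)
    (h : w.1 * w'.2 - w.2 * w'.1 = 0) :
    Projectivization.mk ℝ w hw = Projectivization.mk ℝ w' hw' := by
  rw [mk_eq_mk_iff']
  rcases eq_or_ne w'.1 0 with h1 | h1
  · have h2 : w'.2 ≠ 0 := fun h2 => hw' (Prod.ext h1 h2)
    have hw1 : w.1 = 0 := by
      have := h; rw [h1] at this
      rcases mul_eq_zero.mp (by linarith : w.1 * w'.2 = 0) with h' | h'
      · exact h'
      · exact absurd h' h2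
    refine ⟨w.2 / w'.2, Prod.ext ?_ ?_⟩
    · show w.2 / w'.2 * w'.1 = w.1; rw [h1, hw1, mul_zero]
    · show w.2 / w'.2 * w'.2 = w.2; field_simp
  · refine ⟨w.1 / w'.1, Prod.ext ?_ ?_⟩
    · show w.1 / w'.1 * w'.1 = w.1; field_simp
    · show w.1 / w'.1 * w'.2 = w.2; field_simp; linarith [h]

noncomputable def rt (v : ℝ × ℝ) : ℝ := Real.sqrt (v.1 ^ 2 + v.2 ^ 2)

lemma rt_sq (v : ℝ × ℝ) : rt v ^ 2 = v.1 ^ 2 + v.2 ^ 2 :=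
  Real.sq_sqrt (by positivity)

lemma rt_nonneg (v : ℝ × ℝ) : 0 ≤ rt v := Real.sqrt_nonneg _

lemma rt_pos {v : ℝ × ℝ} (hv : v ≠ 0) : 0 < rt v :=
  Real.sqrt_pos.mpr (sq_add_sq_pos hv)

lemma posU {v : ℝ × ℝ} (hv : v ≠ 0) : (v.2 ≠ 0 ∨ 0 < v.1) ↔ 0 < v.1 + rt v := by
  constructor
  · rintro (h | h)
    · nlinarith [rt_pos hv, rt_sq v, pow_two_pos_of_ne_zero h]
    · linarith [rt_nonneg v]
  · intro h
    by_contra hc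
    push_neg at hc
    obtain ⟨h2, h1⟩ := hc
    nlinarith [rt_sq v, rt_nonneg v]

lemma negU {v : ℝ × ℝ} (hv : v ≠ 0) : (v.2 ≠ 0 ∨ v.1 < 0) ↔ v.1 - rt v < 0 := by
  constructor
  · rintro (h | h)
    · nlinarith [rt_pos hv, rt_sq v, pow_two_pos_of_ne_zero h]
    · linarith [rt_pos hv]
  · intro h
    by_contra hc
    push_neg at hc
    obtain ⟨h2, h1⟩ := hc
    nlinarith [rt_sq v, rt_nonneg v]

lemma cover {v : ℝ × ℝ} (hv : v ≠ 0) : (v.2 ≠ 0 ∨ 0 < v.1) ∨ (v.2 ≠ 0 ∨ v.1 < 0) := by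
  rcases eq_or_ne v.2 0 with h2 | h2
  · rcases lt_trichotomy v.1 0 with h | h | h
    · exact Or.inr (Or.inr h)
    · exact absurd (Prod.ext h h2) hv
    · exact Or.inl (Or.inr h)
  · exact Or.inl (Or.inl h2)

lemma w1_ne {v : ℝ × ℝ} (hv : v ≠ 0) (h : v.2 ≠ 0 ∨ 0 < v.1) :
    (v.1 + Real.sqrt (v.1 ^ 2 + v.2 ^ 2), v.2) ≠ (0 : ℝ × ℝ) := fun hc =>
  (((posU hv).1 h).ne' (Prod.mk_eq_zero.mp hc).1)

lemma w1'_ne {v : ℝ × ℝ} (hv : v ≠ 0) (h : v.2 ≠ 0 ∨ v.1 < 0) :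
    (-v.2, v.1 - Real.sqrt (v.1 ^ 2 + v.2 ^ 2)) ≠ (0 : ℝ × ℝ) := fun hc =>
  (((negU hv).1 h).ne (Prod.mk_eq_zero.mp hc).2)

lemma w2_ne {v : ℝ × ℝ} (hv : v ≠ 0) (h : v.2 ≠ 0 ∨ 0 < v.1) :
    (-v.2, v.1 + Real.sqrt (v.1 ^ 2 + v.2 ^ 2)) ≠ (0 : ℝ × ℝ) := fun hc =>
  (((posU hv).1 h).ne' (Prod.mk_eq_zero.mp hc).2)

lemma w2'_ne {v : ℝ × ℝ} (hv : v ≠ 0) (h : v.2 ≠ 0 ∨ v.1 < 0) :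
    (v.1 - Real.sqrt (v.1 ^ 2 + v.2 ^ 2), v.2) ≠ (0 : ℝ × ℝ) := fun hc =>
  (((negU hv).1 h).ne (Prod.mk_eq_zero.mp hc).1)

lemma not_posU {v : ℝ × ℝ} (hv : v ≠ 0) (h : ¬(v.2 ≠ 0 ∨ 0 < v.1)) :
    v.2 ≠ 0 ∨ v.1 < 0 := (cover hv).resolve_left h

noncomputable def f₁ (v : {v : ℝ × ℝ // v ≠ 0}) : Projectivization ℝ (ℝ × ℝ) :=
  if h : v.1.2 ≠ 0 ∨ 0 < v.1.1 then
    Projectivization.mk ℝ (v.1.1 + Real.sqrt (v.1.1 ^ 2 + v.1.2 ^ 2), v.1.2) (w1_ne v.2 h)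
  else
    Projectivization.mk ℝ (-v.1.2, v.1.1 - Real.sqrt (v.1.1 ^ 2 + v.1.2 ^ 2))
      (w1'_ne v.2 (not_posU v.2 h))

noncomputable def f₂ (v : {v : ℝ × ℝ // v ≠ 0}) : Projectivization ℝ (ℝ × ℝ) :=
  if h : v.1.2 ≠ 0 ∨ 0 < v.1.1 then
    Projectivization.mk ℝ (-v.1.2, v.1.1 + Real.sqrt (v.1.1 ^ 2 + v.1.2 ^ 2)) (w2_ne v.2 h)
  else
    Projectivization.mk ℝ (v.1.1 - Real.sqrt (v.1.1 ^ 2 + v.1.2 ^ 2), v.1.2)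
      (w2'_ne v.2 (not_posU v.2 h))

noncomputable def mkP (w : ℝ × ℝ) : Projectivization ℝ (ℝ × ℝ) :=
  if h : w ≠ 0 then Projectivization.mk ℝ w h
  else Projectivization.mk ℝ (1, 0) (fun hc => one_ne_zero (Prod.mk_eq_zero.mp hc).1)

lemma mkP_eq {w : ℝ × ℝ} (hw : w ≠ 0) : mkP w = Projectivization.mk ℝ w hw := dif_pos hw

lemma continuousAt_mkP {w : ℝ × ℝ} (hw : w ≠ 0) : ContinuousAt mkP w := by
  have hO : IsOpen {w : ℝ × ℝ | w ≠ 0} := isOpen_compl_singleton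
  have hco : ContinuousOn mkP {w : ℝ × ℝ | w ≠ 0} := by
    rw [continuousOn_iff_continuous_restrict]
    have he : Set.domRestrict {w : ℝ × ℝ | w ≠ 0} mkP =
        fun w : {w : ℝ × ℝ | w ≠ 0} => Projectivization.mk' ℝ ⟨w.1, w.2⟩ := by
      funext w
      simp only [Set.domRestrict_apply, mkP_eq w.2]
      rfl
    rw [he]
    exact continuous_quotient_mk'.comp
      (Continuous.subtype_mk continuous_subtype_val _)
  exact hco.continuousAt (hO.mem_nhds hw)

noncomputable def Afun : Projectivization ℝ (ℝ × ℝ) → ℝ :=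
  Projectivization.lift
    (fun w : {v : ℝ × ℝ // v ≠ 0} =>
      ((w : ℝ × ℝ).1 ^ 2 - (w : ℝ × ℝ).2 ^ 2) / ((w : ℝ × ℝ).1 ^ 2 + (w : ℝ × ℝ).2 ^ 2))
    (by
      rintro ⟨a, ha⟩ ⟨b, hb⟩ t h
      simp only at h
      subst h
      have ht : t ≠ 0 := by
        rintro rfl
        exact ha (zero_smul ℝ b)
      have hb0 : b.1 ^ 2 + b.2 ^ 2 ≠ 0 := (sq_add_sq_pos hb).ne'
      show ((t • b).1 ^ 2 - (t • b).2 ^ 2) / ((t • b).1 ^ 2 + (t • b).2 ^ 2) = _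
      have h1 : (t • b).1 = t * b.1 := rfl
      have h2 : (t • b).2 = t * b.2 := rfl
      rw [h1, h2]
      have hA : (t * b.1) ^ 2 + (t * b.2) ^ 2 ≠ 0 := by
        have : (t * b.1) ^ 2 + (t * b.2) ^ 2 = t ^ 2 * (b.1 ^ 2 + b.2 ^ 2) := by ring
        rw [this]
        exact mul_ne_zero (pow_ne_zero 2 ht) hb0
      rw [div_eq_div_iff hA hb0]
      ring)

noncomputable def Bfun : Projectivization ℝ (ℝ × ℝ) → ℝ :=
  Projectivization.lift
    (fun w : {v : ℝ × ℝ // v ≠ 0} =>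
      (2 * (w : ℝ × ℝ).1 * (w : ℝ × ℝ).2) / ((w : ℝ × ℝ).1 ^ 2 + (w : ℝ × ℝ).2 ^ 2))
    (by
      rintro ⟨a, ha⟩ ⟨b, hb⟩ t h
      simp only at h
      subst h
      have ht : t ≠ 0 := by
        rintro rfl
        exact ha (zero_smul ℝ b)
      have hb0 : b.1 ^ 2 + b.2 ^ 2 ≠ 0 := (sq_add_sq_pos hb).ne'
      show (2 * (t • b).1 * (t • b).2) / ((t • b).1 ^ 2 + (t • b).2 ^ 2) = _
      have h1 : (t • b).1 = t * b.1 := rfl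
      have h2 : (t • b).2 = t * b.2 := rfl
      rw [h1, h2]
      have hA : (t * b.1) ^ 2 + (t * b.2) ^ 2 ≠ 0 := by
        have : (t * b.1) ^ 2 + (t * b.2) ^ 2 = t ^ 2 * (b.1 ^ 2 + b.2 ^ 2) := by ring
        rw [this]
        exact mul_ne_zero (pow_ne_zero 2 ht) hb0
      rw [div_eq_div_iff hA hb0]
      ring)

lemma Afun_mk (w : ℝ × ℝ) (hw : w ≠ 0) :
    Afun (Projectivization.mk ℝ w hw) = (w.1 ^ 2 - w.2 ^ 2) / (w.1 ^ 2 + w.2 ^ 2) := rfl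

lemma Bfun_mk (w : ℝ × ℝ) (hw : w ≠ 0) :
    Bfun (Projectivization.mk ℝ w hw) = (2 * w.1 * w.2) / (w.1 ^ 2 + w.2 ^ 2) := rfl

lemma continuous_Afun : Continuous Afun := by
  apply Continuous.quotient_lift
  apply Continuous.div
  · fun_prop
  · fun_prop
  · exact fun w => (sq_add_sq_pos w.2).ne'

lemma continuous_Bfun : Continuous Bfun := by
  apply Continuous.quotient_lift
  apply Continuous.div
  · fun_prop
  · fun_prop
  · exact fun w => (sq_add_sq_pos w.2).ne'

noncomputable def Hval (m : (ℝ × ℝ) × Projectivization ℝ (ℝ × ℝ)) : ℝ :=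
  m.1.1 * Afun m.2 + m.1.2 * Bfun m.2

lemma continuous_Hval : Continuous Hval := by
  apply Continuous.add
  · exact (continuous_fst.fst).mul (continuous_Afun.comp continuous_snd)
  · exact (continuous_fst.snd).mul (continuous_Bfun.comp continuous_snd)

lemma Hval_mk (u : ℝ × ℝ) (w : ℝ × ℝ) (hw : w ≠ 0) :
    Hval (u, Projectivization.mk ℝ w hw) =
      (u.1 * (w.1 ^ 2 - w.2 ^ 2) + u.2 * (2 * w.1 * w.2)) / (w.1 ^ 2 + w.2 ^ 2) := by
  have hb0 : w.1 ^ 2 + w.2 ^ 2 ≠ 0 := (sq_add_sq_pos hw).ne'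
  simp only [Hval, Afun_mk, Bfun_mk]
  field_simp

abbrev Xt := {v : ℝ × ℝ // v ≠ 0}

lemma f₁_eq_pos (v : Xt) (h : v.1.2 ≠ 0 ∨ 0 < v.1.1) :
    f₁ v = mkP (v.1.1 + Real.sqrt (v.1.1 ^ 2 + v.1.2 ^ 2), v.1.2) := by
  rw [f₁, dif_pos h, mkP_eq (w1_ne v.2 h)]

lemma f₁_eq_neg (v : Xt) (h : v.1.2 ≠ 0 ∨ v.1.1 < 0) :
    f₁ v = mkP (-v.1.2, v.1.1 - Real.sqrt (v.1.1 ^ 2 + v.1.2 ^ 2)) := by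
  rw [mkP_eq (w1'_ne v.2 h), f₁]
  split_ifs with h'
  · apply mk_eq_of_cross
    show (v.1.1 + rt v.1) * (v.1.1 - rt v.1) - v.1.2 * (-v.1.2) = 0
    linear_combination (-1 : ℝ) * rt_sq v.1
  · rfl

lemma f₂_eq_pos (v : Xt) (h : v.1.2 ≠ 0 ∨ 0 < v.1.1) :
    f₂ v = mkP (-v.1.2, v.1.1 + Real.sqrt (v.1.1 ^ 2 + v.1.2 ^ 2)) := by
  rw [f₂, dif_pos h, mkP_eq (w2_ne v.2 h)]

lemma f₂_eq_neg (v : Xt) (h : v.1.2 ≠ 0 ∨ v.1.1 < 0) :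
    f₂ v = mkP (v.1.1 - Real.sqrt (v.1.1 ^ 2 + v.1.2 ^ 2), v.1.2) := by
  rw [mkP_eq (w2'_ne v.2 h), f₂]
  split_ifs with h'
  · apply mk_eq_of_cross
    show (-v.1.2) * v.1.2 - (v.1.1 + rt v.1) * (v.1.1 - rt v.1) = 0
    linear_combination rt_sq v.1
  · rfl

lemma isOpen_setP : IsOpen {v : Xt | v.1.2 ≠ 0 ∨ 0 < v.1.1} := by
  have h1 : IsOpen {w : ℝ × ℝ | w.2 ≠ 0 ∨ 0 < w.1} := by
    have ha : IsOpen {w : ℝ × ℝ | w.2 ≠ 0} := isOpen_compl_singleton.preimage continuous_snd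
    have hb : IsOpen {w : ℝ × ℝ | 0 < w.1} := isOpen_Ioi.preimage continuous_fst
    simpa [Set.setOf_or] using ha.union hb
  exact h1.preimage continuous_subtype_val

lemma isOpen_setN : IsOpen {v : Xt | v.1.2 ≠ 0 ∨ v.1.1 < 0} := by
  have h1 : IsOpen {w : ℝ × ℝ | w.2 ≠ 0 ∨ w.1 < 0} := by
    have ha : IsOpen {w : ℝ × ℝ | w.2 ≠ 0} := isOpen_compl_singleton.preimage continuous_snd
    have hb : IsOpen {w : ℝ × ℝ | w.1 < 0} := isOpen_Iio.preimage continuous_fst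
    simpa [Set.setOf_or] using ha.union hb
  exact h1.preimage continuous_subtype_val

lemma continuous_inner1 : Continuous
    (fun v : Xt => (v.1.1 + Real.sqrt (v.1.1 ^ 2 + v.1.2 ^ 2), v.1.2)) := by
  apply Continuous.prodMk
  · exact ((continuous_fst.comp continuous_subtype_val)).add
      (Real.continuous_sqrt.comp (by fun_prop))
  · fun_prop

lemma continuous_inner1' : Continuous
    (fun v : Xt => (-v.1.2, v.1.1 - Real.sqrt (v.1.1 ^ 2 + v.1.2 ^ 2))) := by
  apply Continuous.prodMk
  · fun_prop
  · exact ((continuous_fst.comp continuous_subtype_val)).sub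
      (Real.continuous_sqrt.comp (by fun_prop))

lemma continuous_inner2 : Continuous
    (fun v : Xt => (-v.1.2, v.1.1 + Real.sqrt (v.1.1 ^ 2 + v.1.2 ^ 2))) := by
  apply Continuous.prodMk
  · fun_prop
  · exact ((continuous_fst.comp continuous_subtype_val)).add
      (Real.continuous_sqrt.comp (by fun_prop))

lemma continuous_inner2' : Continuous
    (fun v : Xt => (v.1.1 - Real.sqrt (v.1.1 ^ 2 + v.1.2 ^ 2), v.1.2)) := by
  apply Continuous.prodMk
  · exact ((continuous_fst.comp continuous_subtype_val)).sub
      (Real.continuous_sqrt.comp (by fun_prop))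
  · fun_prop

lemma continuous_f₁ : Continuous f₁ := by
  rw [continuous_iff_continuousAt]
  intro v₀
  rcases cover v₀.2 with h | h
  · refine ContinuousAt.congr ?_
      (Filter.eventuallyEq_of_mem (isOpen_setP.mem_nhds h) (fun v hv => (f₁_eq_pos v hv).symm))
    show ContinuousAt (mkP ∘ (fun v : Xt => (v.1.1 + Real.sqrt (v.1.1 ^ 2 + v.1.2 ^ 2), v.1.2))) v₀
    exact ContinuousAt.comp (continuousAt_mkP (w1_ne v₀.2 h)) continuous_inner1.continuousAt
  · refine ContinuousAt.congr ?_
      (Filter.eventuallyEq_of_mem (isOpen_setN.mem_nhds h) (fun v hv => (f₁_eq_neg v hv).symm))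
    show ContinuousAt (mkP ∘ (fun v : Xt => (-v.1.2, v.1.1 - Real.sqrt (v.1.1 ^ 2 + v.1.2 ^ 2)))) v₀
    exact ContinuousAt.comp (continuousAt_mkP (w1'_ne v₀.2 h)) continuous_inner1'.continuousAt

lemma continuous_f₂ : Continuous f₂ := by
  rw [continuous_iff_continuousAt]
  intro v₀
  rcases cover v₀.2 with h | h
  · refine ContinuousAt.congr ?_
      (Filter.eventuallyEq_of_mem (isOpen_setP.mem_nhds h) (fun v hv => (f₂_eq_pos v hv).symm))
    show ContinuousAt (mkP ∘ (fun v : Xt => (-v.1.2, v.1.1 + Real.sqrt (v.1.1 ^ 2 + v.1.2 ^ 2)))) v₀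
    exact ContinuousAt.comp (continuousAt_mkP (w2_ne v₀.2 h)) continuous_inner2.continuousAt
  · refine ContinuousAt.congr ?_
      (Filter.eventuallyEq_of_mem (isOpen_setN.mem_nhds h) (fun v hv => (f₂_eq_neg v hv).symm))
    show ContinuousAt (mkP ∘ (fun v : Xt => (v.1.1 - Real.sqrt (v.1.1 ^ 2 + v.1.2 ^ 2), v.1.2))) v₀
    exact ContinuousAt.comp (continuousAt_mkP (w2'_ne v₀.2 h)) continuous_inner2'.continuousAt

lemma mem_bdeQ_f₁ (v : Xt) : (v.1, f₁ v) ∈ bdeQ := by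
  rw [f₁]
  split_ifs with h
  · refine (bde_mk_iff v.1.1 v.1.2 _ (w1_ne v.2 h)).2 ?_
    show v.1.2 * (v.1.1 + rt v.1) ^ 2 - 2 * v.1.1 * (v.1.1 + rt v.1) * v.1.2 -
        v.1.2 * v.1.2 ^ 2 = 0
    linear_combination v.1.2 * rt_sq v.1
  · refine (bde_mk_iff v.1.1 v.1.2 _ (w1'_ne v.2 (not_posU v.2 h))).2 ?_
    show v.1.2 * (-v.1.2) ^ 2 - 2 * v.1.1 * (-v.1.2) * (v.1.1 - rt v.1) -
        v.1.2 * (v.1.1 - rt v.1) ^ 2 = 0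
    linear_combination (-v.1.2) * rt_sq v.1

lemma mem_bdeQ_f₂ (v : Xt) : (v.1, f₂ v) ∈ bdeQ := by
  rw [f₂]
  split_ifs with h
  · refine (bde_mk_iff v.1.1 v.1.2 _ (w2_ne v.2 h)).2 ?_
    show v.1.2 * (-v.1.2) ^ 2 - 2 * v.1.1 * (-v.1.2) * (v.1.1 + rt v.1) -
        v.1.2 * (v.1.1 + rt v.1) ^ 2 = 0
    linear_combination (-v.1.2) * rt_sq v.1
  · refine (bde_mk_iff v.1.1 v.1.2 _ (w2'_ne v.2 (not_posU v.2 h))).2 ?_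
    show v.1.2 * (v.1.1 - rt v.1) ^ 2 - 2 * v.1.1 * (v.1.1 - rt v.1) * v.1.2 -
        v.1.2 * v.1.2 ^ 2 = 0
    linear_combination v.1.2 * rt_sq v.1

lemma Hval_f₁_pos (v : Xt) : 0 < Hval (v.1, f₁ v) := by
  have hr2 := rt_sq v.1
  have hr := rt_pos v.2
  rw [f₁]
  split_ifs with h
  · rw [Hval_mk]
    show 0 < (v.1.1 * ((v.1.1 + rt v.1) ^ 2 - v.1.2 ^ 2) +
        v.1.2 * (2 * (v.1.1 + rt v.1) * v.1.2)) / ((v.1.1 + rt v.1) ^ 2 + v.1.2 ^ 2)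
    apply div_pos
    · have hx : 0 < v.1.1 + rt v.1 := (posU v.2).1 h
      have : v.1.1 * ((v.1.1 + rt v.1) ^ 2 - v.1.2 ^ 2) +
          v.1.2 * (2 * (v.1.1 + rt v.1) * v.1.2) =
          2 * (v.1.1 + rt v.1) * (v.1.1 ^ 2 + v.1.2 ^ 2) := by
        linear_combination v.1.1 * hr2
      rw [this]
      have := sq_add_sq_pos v.2
      positivity
    · exact sq_add_sq_pos (w1_ne v.2 h)
  · rw [Hval_mk]
    show 0 < (v.1.1 * ((-v.1.2) ^ 2 - (v.1.1 - rt v.1) ^ 2) +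
        v.1.2 * (2 * (-v.1.2) * (v.1.1 - rt v.1))) / ((-v.1.2) ^ 2 + (v.1.1 - rt v.1) ^ 2)
    apply div_pos
    · have hx : v.1.1 - rt v.1 < 0 := (negU v.2).1 (not_posU v.2 h)
      have : v.1.1 * ((-v.1.2) ^ 2 - (v.1.1 - rt v.1) ^ 2) +
          v.1.2 * (2 * (-v.1.2) * (v.1.1 - rt v.1)) =
          2 * (rt v.1 - v.1.1) * (v.1.1 ^ 2 + v.1.2 ^ 2) := by
        linear_combination (-v.1.1) * hr2
      rw [this]
      have h1 := sq_add_sq_pos v.2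
      have h2 : 0 < rt v.1 - v.1.1 := by linarith
      positivity
    · exact sq_add_sq_pos (w1'_ne v.2 (not_posU v.2 h))

lemma Hval_f₂_neg (v : Xt) : Hval (v.1, f₂ v) < 0 := by
  have hr2 := rt_sq v.1
  have hr := rt_pos v.2
  rw [f₂]
  split_ifs with h
  · rw [Hval_mk]
    show (v.1.1 * ((-v.1.2) ^ 2 - (v.1.1 + rt v.1) ^ 2) +
        v.1.2 * (2 * (-v.1.2) * (v.1.1 + rt v.1))) / ((-v.1.2) ^ 2 + (v.1.1 + rt v.1) ^ 2) < 0
    apply div_neg_of_neg_of_pos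
    · have hx : 0 < v.1.1 + rt v.1 := (posU v.2).1 h
      have : v.1.1 * ((-v.1.2) ^ 2 - (v.1.1 + rt v.1) ^ 2) +
          v.1.2 * (2 * (-v.1.2) * (v.1.1 + rt v.1)) =
          -(2 * (v.1.1 + rt v.1) * (v.1.1 ^ 2 + v.1.2 ^ 2)) := by
        linear_combination (-v.1.1) * hr2
      rw [this]
      have := sq_add_sq_pos v.2
      have hp : 0 < 2 * (v.1.1 + rt v.1) * (v.1.1 ^ 2 + v.1.2 ^ 2) := by positivity
      linarith
    · exact sq_add_sq_pos (w2_ne v.2 h)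
  · rw [Hval_mk]
    show (v.1.1 * ((v.1.1 - rt v.1) ^ 2 - v.1.2 ^ 2) +
        v.1.2 * (2 * (v.1.1 - rt v.1) * v.1.2)) / ((v.1.1 - rt v.1) ^ 2 + v.1.2 ^ 2) < 0
    apply div_neg_of_neg_of_pos
    · have hx : v.1.1 - rt v.1 < 0 := (negU v.2).1 (not_posU v.2 h)
      have : v.1.1 * ((v.1.1 - rt v.1) ^ 2 - v.1.2 ^ 2) +
          v.1.2 * (2 * (v.1.1 - rt v.1) * v.1.2) =
          -(2 * (rt v.1 - v.1.1) * (v.1.1 ^ 2 + v.1.2 ^ 2)) := by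
        linear_combination v.1.1 * hr2
      rw [this]
      have h1 := sq_add_sq_pos v.2
      have h2 : 0 < rt v.1 - v.1.1 := by linarith
      have hp : 0 < 2 * (rt v.1 - v.1.1) * (v.1.1 ^ 2 + v.1.2 ^ 2) := by positivity
      linarith
    · exact sq_add_sq_pos (w2'_ne v.2 (not_posU v.2 h))

lemma f₁_ne_f₂ (v : Xt) : f₁ v ≠ f₂ v := fun h => by
  have h1 := Hval_f₁_pos v
  have h2 := Hval_f₂_neg v
  rw [h] at h1
  linarith

lemma dichotomy (x y p q : ℝ) (hv : (x, y) ≠ 0) (hw : (p, q) ≠ 0)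
    (hE : y * p ^ 2 - 2 * x * p * q - y * q ^ 2 = 0) :
    Projectivization.mk ℝ (p, q) hw = f₁ ⟨(x, y), hv⟩ ∨
    Projectivization.mk ℝ (p, q) hw = f₂ ⟨(x, y), hv⟩ := by
  have hr2 : rt (x, y) ^ 2 = x ^ 2 + y ^ 2 := rt_sq (x, y)
  have hr : 0 < rt (x, y) := rt_pos hv
  have hS : 0 < p ^ 2 + q ^ 2 := sq_add_sq_pos hw
  set r := rt (x, y) with hrdef
  have hN : (x * (p ^ 2 - q ^ 2) + y * (2 * p * q)) ^ 2 = (r * (p ^ 2 + q ^ 2)) ^ 2 := by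
    linear_combination (-(y * p ^ 2 - 2 * x * p * q - y * q ^ 2)) * hE -
      ((p ^ 2 + q ^ 2) ^ 2) * hr2
  have hud : ((x + r) * p + y * q) * ((x + r) * q - y * p) = 0 := by
    linear_combination (-(x + r)) * hE + (p * q) * hr2
  have hu2d2 : ((x + r) * p + y * q) ^ 2 - ((x + r) * q - y * p) ^ 2
      = 2 * (x + r) * (x * (p ^ 2 - q ^ 2) + y * (2 * p * q)) := by
    linear_combination (p ^ 2 - q ^ 2) * hr2
  rcases sq_eq_sq_iff_eq_or_eq_neg.mp hN with hform | hform
  · -- N positive: this is the f₁ branch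
    left
    rw [f₁]
    split_ifs with h
    · apply mk_eq_of_cross
      show p * y - q * (x + r) = 0
      have hxr : 0 < x + r := (posU hv).1 h
      rcases mul_eq_zero.mp hud with hu | hd
      · exfalso
        have hu2 : ((x + r) * p + y * q) ^ 2 = 0 := by rw [hu]; ring
        have key : ((x + r) * p + y * q) ^ 2 - ((x + r) * q - y * p) ^ 2
            = 2 * (x + r) * (r * (p ^ 2 + q ^ 2)) := by rw [← hform]; exact hu2d2
        have hpos : 0 < 2 * (x + r) * (r * (p ^ 2 + q ^ 2)) :=
          mul_pos (by linarith) (mul_pos hr hS)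
        nlinarith [sq_nonneg ((x + r) * q - y * p)]
      · linarith [hd]
    · push_neg at h
      have hy : y = 0 := h.1
      have hxle : x ≤ 0 := h.2
      have hx0 : x ≠ 0 := fun hx => hv (Prod.ext hx hy)
      have hxneg : x < 0 := lt_of_le_of_ne hxle hx0
      have hrx : r = -x := by nlinarith
      rw [hrx, hy] at hform
      have h2 : 2 * x * p ^ 2 = 0 := by linear_combination hform
      have hp : p = 0 := by
        rcases mul_eq_zero.mp h2 with h' | h'
        · exact absurd h' (by intro hc; apply hx0; linarith)
        · exact (pow_eq_zero_iff (two_ne_zero)).mp h'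
      apply mk_eq_of_cross
      show p * (x - r) - q * (-y) = 0
      rw [hp, hy]
      ring
  · right
    rw [f₂]
    split_ifs with h
    · apply mk_eq_of_cross
      show p * (x + r) - q * (-y) = 0
      have hxr : 0 < x + r := (posU hv).1 h
      rcases mul_eq_zero.mp hud with hu | hd
      · linarith [hu]
      · exfalso
        have hd2 : ((x + r) * q - y * p) ^ 2 = 0 := by rw [hd]; ring
        have key : ((x + r) * p + y * q) ^ 2 - ((x + r) * q - y * p) ^ 2
            = -(2 * (x + r) * (r * (p ^ 2 + q ^ 2))) := by
          rw [hu2d2, hform]; ring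
        have hpos : 0 < 2 * (x + r) * (r * (p ^ 2 + q ^ 2)) :=
          mul_pos (by linarith) (mul_pos hr hS)
        nlinarith [sq_nonneg ((x + r) * p + y * q)]
    · push_neg at h
      have hy : y = 0 := h.1
      have hxle : x ≤ 0 := h.2
      have hx0 : x ≠ 0 := fun hx => hv (Prod.ext hx hy)
      have hxneg : x < 0 := lt_of_le_of_ne hxle hx0
      have hrx : r = -x := by nlinarith
      rw [hrx, hy] at hform
      have h2 : 2 * x * q ^ 2 = 0 := by linear_combination (-1 : ℝ) * hform
      have hq : q = 0 := by
        rcases mul_eq_zero.mp h2 with h' | h'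
        · exact absurd h' (by intro hc; apply hx0; linarith)
        · exact (pow_eq_zero_iff (two_ne_zero)).mp h'
      apply mk_eq_of_cross
      show p * y - q * (x - r) = 0
      rw [hq, hy]
      ring

abbrev Et := {m : (ℝ × ℝ) × Projectivization ℝ (ℝ × ℝ) // m ∈ bdeQ ∧ m.1 ≠ 0}

noncomputable def pr (m : Et) : Xt := ⟨m.1.1, m.2.2⟩

noncomputable def S₁ (v : Xt) : Et := ⟨(v.1, f₁ v), ⟨mem_bdeQ_f₁ v, v.2⟩⟩

noncomputable def S₂ (v : Xt) : Et := ⟨(v.1, f₂ v), ⟨mem_bdeQ_f₂ v, v.2⟩⟩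

lemma pr_S₁ (v : Xt) : pr (S₁ v) = v := rfl

lemma pr_S₂ (v : Xt) : pr (S₂ v) = v := rfl

lemma continuous_pr : Continuous pr := by
  unfold pr
  exact Continuous.subtype_mk (continuous_subtype_val.fst) _

lemma continuous_S₁ : Continuous S₁ :=
  Continuous.subtype_mk (continuous_subtype_val.prodMk continuous_f₁) _

lemma continuous_S₂ : Continuous S₂ :=
  Continuous.subtype_mk (continuous_subtype_val.prodMk continuous_f₂) _

lemma dichotomyE (m : Et) : m = S₁ (pr m) ∨ m = S₂ (pr m) := by
  have hv : m.1.1 ≠ 0 := m.2.2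
  have hrep' : (m.1.2.rep.1, m.1.2.rep.2) ≠ (0 : ℝ × ℝ) :=
    Projectivization.rep_nonzero m.1.2
  have h := dichotomy m.1.1.1 m.1.1.2 m.1.2.rep.1 m.1.2.rep.2 hv hrep' m.2.1
  have hmk : Projectivization.mk ℝ (m.1.2.rep.1, m.1.2.rep.2) hrep' = m.1.2 :=
    Projectivization.mk_rep m.1.2
  rw [hmk] at h
  rcases h with h | h
  · exact Or.inl (Subtype.ext (Prod.ext rfl h))
  · exact Or.inr (Subtype.ext (Prod.ext rfl h))

lemma Hval_pos_or_neg (m : Et) : 0 < Hval m.1 ∨ Hval m.1 < 0 := by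
  rcases dichotomyE m with h | h
  · left; rw [h]; exact Hval_f₁_pos (pr m)
  · right; rw [h]; exact Hval_f₂_neg (pr m)

open Classical in
noncomputable def φ : Et ≃ₜ Xt × Bool where
  toFun m := (pr m, decide (0 < Hval m.1))
  invFun p := cond p.2 (S₁ p.1) (S₂ p.1)
  left_inv m := by
    rcases dichotomyE m with h | h
    · have hpos : 0 < Hval m.1 := by rw [h]; exact Hval_f₁_pos (pr m)
      have hb : decide (0 < Hval m.1) = true := decide_eq_true hpos
      show cond (decide (0 < Hval m.1)) (S₁ (pr m)) (S₂ (pr m)) = m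
      rw [hb]
      exact h.symm
    · have hneg : Hval m.1 < 0 := by rw [h]; exact Hval_f₂_neg (pr m)
      have hb : decide (0 < Hval m.1) = false := decide_eq_false (not_lt.mpr hneg.le)
      show cond (decide (0 < Hval m.1)) (S₁ (pr m)) (S₂ (pr m)) = m
      rw [hb]
      exact h.symm
  right_inv p := by
    match p with
    | (v, true) =>
      have h2 : decide (0 < Hval (S₁ v).1) = true := decide_eq_true (Hval_f₁_pos v)
      exact Prod.ext (pr_S₁ v) h2
    | (v, false) =>
      have h2 : decide (0 < Hval (S₂ v).1) = false :=
        decide_eq_false (not_lt.mpr (Hval_f₂_neg v).le)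
      exact Prod.ext (pr_S₂ v) h2
  continuous_toFun := by
    refine continuous_pr.prodMk ?_
    apply IsLocallyConstant.continuous
    rw [IsLocallyConstant.iff_isOpen_fiber]
    intro b
    cases b
    · have hs : (fun m : Et => decide (0 < Hval m.1)) ⁻¹' {false} =
          (fun m : Et => Hval m.1) ⁻¹' Set.Iio 0 := by
        ext m
        simp only [Set.mem_preimage, Set.mem_singleton_iff, decide_eq_false_iff_not,
          not_lt, Set.mem_Iio]
        exact ⟨fun hle => (Hval_pos_or_neg m).resolve_left (not_lt.mpr hle),
          fun h => h.le⟩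
      rw [hs]
      exact isOpen_Iio.preimage (continuous_Hval.comp continuous_subtype_val)
    · have hs : (fun m : Et => decide (0 < Hval m.1)) ⁻¹' {true} =
          (fun m : Et => Hval m.1) ⁻¹' Set.Ioi 0 := by
        ext m
        simp only [Set.mem_preimage, Set.mem_singleton_iff, decide_eq_true_eq, Set.mem_Ioi]
      rw [hs]
      exact isOpen_Ioi.preimage (continuous_Hval.comp continuous_subtype_val)
  continuous_invFun := by
    rw [continuous_iff_continuousAt]
    rintro ⟨v, b⟩
    cases b
    · have hmem : {p : Xt × Bool | p.2 = false} ∈ nhds ((v, false) : Xt × Bool) := by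
        refine IsOpen.mem_nhds ?_ rfl
        have h : {p : Xt × Bool | p.2 = false} = Prod.snd ⁻¹' {false} := rfl
        rw [h]
        exact (isOpen_discrete _).preimage continuous_snd
      have hev : (fun p : Xt × Bool => S₂ p.1) =ᶠ[nhds ((v, false) : Xt × Bool)]
          (fun p : Xt × Bool => cond p.2 (S₁ p.1) (S₂ p.1)) :=
        Filter.eventuallyEq_of_mem hmem
          (fun p hp => by rw [show p.2 = false from hp]; rfl)
      exact ContinuousAt.congr
        (show ContinuousAt (fun p : Xt × Bool => S₂ p.1) ((v, false) : Xt × Bool) from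
          (continuous_S₂.comp continuous_fst).continuousAt) hev
    · have hmem : {p : Xt × Bool | p.2 = true} ∈ nhds ((v, true) : Xt × Bool) := by
        refine IsOpen.mem_nhds ?_ rfl
        have h : {p : Xt × Bool | p.2 = true} = Prod.snd ⁻¹' {true} := rfl
        rw [h]
        exact (isOpen_discrete _).preimage continuous_snd
      have hev : (fun p : Xt × Bool => S₁ p.1) =ᶠ[nhds ((v, true) : Xt × Bool)]
          (fun p : Xt × Bool => cond p.2 (S₁ p.1) (S₂ p.1)) :=
        Filter.eventuallyEq_of_mem hmem
          (fun p hp => by rw [show p.2 = true from hp]; rfl)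
      exact ContinuousAt.congr
        (show ContinuousAt (fun p : Xt × Bool => S₁ p.1) ((v, true) : Xt × Bool) from
          (continuous_S₁.comp continuous_fst).continuousAt) hev

noncomputable def triv : Bundle.Trivialization Bool pr where
  toOpenPartialHomeomorph := φ.toOpenPartialHomeomorph
  baseSet := Set.univ
  open_baseSet := isOpen_univ
  source_eq := by
    show (Set.univ : Set Et) = pr ⁻¹' Set.univ
    exact (Set.preimage_univ).symm
  target_eq := by
    show (Set.univ : Set (Xt × Bool)) = Set.univ ×ˢ Set.univ
    exact (Set.univ_prod_univ).symm
  proj_toFun p _ := rfl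

lemma isCoveringMap_pr : IsCoveringMap pr :=
  IsCoveringMap.mk pr (fun _ => Bool) (fun _ => triv) (fun x => Set.mem_univ x)

lemma fiber_eq (v : Xt) : pr ⁻¹' {v} = {S₁ v, S₂ v} := by
  ext m
  simp only [Set.mem_preimage, Set.mem_singleton_iff, Set.mem_insert_iff]
  constructor
  · intro h
    rcases dichotomyE m with hm | hm
    · left; rw [hm, h]
    · right; rw [hm, h]
  · rintro (h | h) <;> rw [h]
    · exact pr_S₁ v
    · exact pr_S₂ v

lemma S₁_ne_S₂ (v : Xt) : S₁ v ≠ S₂ v := fun h => by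
  have h2 : f₁ v = f₂ v := congrArg (fun m : Et => m.1.2) h
  exact f₁_ne_f₂ v h2

lemma card_fiber (v : Xt) : Nat.card (pr ⁻¹' {v}) = 2 := by
  rw [fiber_eq, Nat.card_coe_set_eq, Set.ncard_pair (S₁_ne_S₂ v)]

lemma ranges_inter : Set.range S₁ ∩ Set.range S₂ = ∅ := by
  ext m
  simp only [Set.mem_inter_iff, Set.mem_range, Set.mem_empty_iff_false, iff_false, not_and]
  rintro ⟨v, hv⟩ ⟨v', hv'⟩
  have hvv : v = v' := by
    have h := congrArg pr (hv.trans hv'.symm)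
    rw [pr_S₁, pr_S₂] at h
    exact h
  subst hvv
  exact S₁_ne_S₂ v (hv.trans hv'.symm)

lemma ranges_union : Set.range S₁ ∪ Set.range S₂ = Set.univ := by
  ext m
  simp only [Set.mem_union, Set.mem_range, Set.mem_univ, iff_true]
  rcases dichotomyE m with h | h
  · exact Or.inl ⟨pr m, h.symm⟩
  · exact Or.inr ⟨pr m, h.symm⟩

end Stmt14N

/-- For the binary differential equation `y dx² - 2x dxdy - y dy² = 0` on
`ℝ²`, with solution set `Q ⊆ ℝ² × ℝP¹`, the projection `(x,y,[p:q]) ↦ (x,y)` restricted to the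
part `Q'` of `Q` over `M' = ℝ² \ {0}` is a 2-sheeted covering map, and this covering is
trivial: it admits two disjoint continuous sections `s₁, s₂` whose images cover `Q'`
(given on the slit planes by `s₁ = [x+√(x²+y²) : y]`, resp. `[-y : x-√(x²+y²)]`,
and `s₂` with the roles exchanged). -/
theorem stmt14 :
    IsCoveringMap (fun m : {m : (ℝ × ℝ) × Projectivization ℝ (ℝ × ℝ) //
        m ∈ bdeQ ∧ m.1 ≠ 0} => (⟨m.1.1, m.2.2⟩ : {v : ℝ × ℝ // v ≠ 0})) ∧
    (∀ v : {v : ℝ × ℝ // v ≠ 0}, Nat.card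
      ((fun m : {m : (ℝ × ℝ) × Projectivization ℝ (ℝ × ℝ) //
          m ∈ bdeQ ∧ m.1 ≠ 0} => (⟨m.1.1, m.2.2⟩ : {v : ℝ × ℝ // v ≠ 0})) ⁻¹' {v}) = 2) ∧
    ∃ s₁ s₂ : {v : ℝ × ℝ // v ≠ 0} →
        {m : (ℝ × ℝ) × Projectivization ℝ (ℝ × ℝ) // m ∈ bdeQ ∧ m.1 ≠ 0},
      Continuous s₁ ∧ Continuous s₂ ∧
      (∀ v, ((s₁ v : (ℝ × ℝ) × Projectivization ℝ (ℝ × ℝ)).1 = (v : ℝ × ℝ))) ∧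
      (∀ v, ((s₂ v : (ℝ × ℝ) × Projectivization ℝ (ℝ × ℝ)).1 = (v : ℝ × ℝ))) ∧
      (∀ (v : {v : ℝ × ℝ // v ≠ 0}) (hv : (v : ℝ × ℝ).2 ≠ 0 ∨ 0 < (v : ℝ × ℝ).1)
        (h1 : (((v : ℝ × ℝ).1 + Real.sqrt ((v : ℝ × ℝ).1 ^ 2 + (v : ℝ × ℝ).2 ^ 2),
          (v : ℝ × ℝ).2) : ℝ × ℝ) ≠ 0),
        ((s₁ v : (ℝ × ℝ) × Projectivization ℝ (ℝ × ℝ)).2 =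
          Projectivization.mk ℝ _ h1)) ∧
      (∀ (v : {v : ℝ × ℝ // v ≠ 0}) (hv : (v : ℝ × ℝ).2 ≠ 0 ∨ 0 < (v : ℝ × ℝ).1)
        (h2 : ((-(v : ℝ × ℝ).2, (v : ℝ × ℝ).1 +
          Real.sqrt ((v : ℝ × ℝ).1 ^ 2 + (v : ℝ × ℝ).2 ^ 2)) : ℝ × ℝ) ≠ 0),
        ((s₂ v : (ℝ × ℝ) × Projectivization ℝ (ℝ × ℝ)).2 =
          Projectivization.mk ℝ _ h2)) ∧
      (Set.range s₁ ∩ Set.range s₂ = ∅) ∧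
      (Set.range s₁ ∪ Set.range s₂ = Set.univ) := by
  refine ⟨?_, ?_, Stmt14N.S₁, Stmt14N.S₂, Stmt14N.continuous_S₁, Stmt14N.continuous_S₂,
    fun v => rfl, fun v => rfl, ?_, ?_, Stmt14N.ranges_inter, Stmt14N.ranges_union⟩
  · exact Stmt14N.isCoveringMap_pr
  · exact Stmt14N.card_fiber
  · intro v hv h1
    show Stmt14N.f₁ v = _
    rw [Stmt14N.f₁, dif_pos hv]
  · intro v hv h2
    show Stmt14N.f₂ v = _
    rw [Stmt14N.f₂, dif_pos hv]
end
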